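/- Fix an integer p ≥ 2 and set q = exp(iπ/p) ∈ ℂ. In B = A/I (the Nichols algebra of the braided vector space with braiding matrix q₁₁ = q₂₂ = q², q₁₂ = q₂₁ = q⁻¹), the p³ images of the monomials F1^r·F3^t·F2^s for 0 ≤ r,t,s ≤ p−1 form a ℂ-vector-space basis of B; in particular dim_ℂ B = p³. -/

import Mathlib

open scoped Complex

/-- The free associative unital `ℂ`-algebra on two generators. -/
noncomputable abbrev A := FreeAlgebra ℂ (Fin 2)

noncomputable def F1 : A := FreeAlgebra.ι ℂ 0
noncomputable def F2 : A := FreeAlgebra.ι ℂ 1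

/-- `q = exp(iπ/p)`. -/
noncomputable def qval (p : ℕ) : ℂ := Complex.exp (Real.pi * Complex.I / p)

/-- `F3 = F2·F1 − q⁻¹·F1·F2`. -/
noncomputable def F3 (p : ℕ) : A := F2 * F1 - (qval p)⁻¹ • (F1 * F2)

/-- The relation whose induced ring congruence realizes the quotient of `A` by the
two-sided ideal generated by the five defining relators of the Nichols algebra. -/
def nicholsRel (p : ℕ) : A → A → Prop := fun x y =>
  y = 0 ∧
    x ∈ ({F1 ^ 2 * F2 - (qval p + (qval p)⁻¹) • (F1 * F2 * F1) + F2 * F1 ^ 2,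
          F2 ^ 2 * F1 - (qval p + (qval p)⁻¹) • (F2 * F1 * F2) + F1 * F2 ^ 2,
          F1 ^ p, F3 p ^ p, F2 ^ p} : Set A)

/-- The Nichols algebra `B = A/I`. -/
noncomputable abbrev NicholsB (p : ℕ) := RingQuot (nicholsRel p)

/-- The image in `B` of the PBW monomial `F1^r · F3^t · F2^s`. -/
noncomputable def pbw (p : ℕ) (r t s : ℕ) : NicholsB p :=
  RingQuot.mkAlgHom ℂ (nicholsRel p) (F1 ^ r * F3 p ^ t * F2 ^ s)

namespace NP

/-! ### Scalar lemmas about `q` -/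

variable (p : ℕ)

lemma q_ne_zero : qval p ≠ 0 := Complex.exp_ne_zero _

lemma q_pow (k : ℕ) : qval p ^ k = Complex.exp (k * (Real.pi * Complex.I / p)) := by
  rw [qval, ← Complex.exp_nat_mul]

lemma q_pow_p (hp : 2 ≤ p) : qval p ^ p = -1 := by
  have hp0 : (p:ℂ) ≠ 0 := by exact_mod_cast (by omega : 0 < p).ne'
  rw [q_pow]
  rw [show (p:ℂ) * (Real.pi * Complex.I / p) = Real.pi * Complex.I by field_simp]
  exact Complex.exp_pi_mul_I

lemma q_sq_pow_ne_one (hp : 2 ≤ p) (j : ℕ) (h0 : 0 < j) (hj : j < p) :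
    (qval p ^ 2) ^ j ≠ 1 := by
  have hp0 : (p:ℂ) ≠ 0 := by exact_mod_cast (by omega : 0 < p).ne'
  rw [← pow_mul, q_pow]
  intro h
  rw [Complex.exp_eq_one_iff] at h
  obtain ⟨n, hn⟩ := h
  rw [show ((2*j : ℕ) : ℂ) * (Real.pi * Complex.I / p) = (2*j/p : ℂ) * (Real.pi * Complex.I) by push_cast; ring,
    show (n:ℂ) * (2 * Real.pi * Complex.I) = (2*n : ℂ) * (Real.pi * Complex.I) by push_cast; ring] at hn
  have hpi : (Real.pi : ℂ) * Complex.I ≠ 0 := by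
    simp [Complex.I_ne_zero, Real.pi_ne_zero, Complex.ofReal_eq_zero]
  have h2 : (2*j/p : ℂ) = 2*n := mul_right_cancel₀ hpi hn
  have : (j : ℂ) = n * p := by field_simp at h2; linear_combination h2
  have hj2 : (j : ℤ) = n * p := by exact_mod_cast this
  have hp' : (0:ℤ) < (p:ℤ) := by exact_mod_cast (by omega : 0 < p)
  have hj0 : (0:ℤ) < (j:ℤ) := by exact_mod_cast h0
  have hjp : (j:ℤ) < (p:ℤ) := by exact_mod_cast hj
  rcases le_or_gt n 0 with hn'|hn'
  · nlinarith
  · nlinarith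

lemma q_inv_pow_p (hp : 2 ≤ p) : (qval p)⁻¹ ^ p = -1 := by
  rw [inv_pow, q_pow_p p hp]; norm_num

lemma q_sub_inv_ne_zero (hp : 2 ≤ p) : qval p - (qval p)⁻¹ ≠ 0 := by
  intro h
  have h1 : qval p * (qval p - (qval p)⁻¹) = qval p ^ 2 - 1 := by
    field_simp [q_ne_zero p]
  have := q_sq_pow_ne_one p hp 1 one_pos (by omega)
  rw [pow_one] at this
  apply this
  have : qval p ^ 2 - 1 = 0 := by rw [← h1, h, mul_zero]
  linear_combination this

lemma q_pow_pm1 (hp : 2 ≤ p) : qval p ^ (p-1) = -(qval p)⁻¹ := by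
  have h : qval p ^ (p-1) * qval p = -1 := by
    rw [← pow_succ, show p - 1 + 1 = p by omega, q_pow_p p hp]
  field_simp [q_ne_zero p] at h ⊢
  linear_combination h

lemma q_inv_pow_pm1 (hp : 2 ≤ p) : (qval p)⁻¹ ^ (p-1) = -(qval p) := by
  rw [inv_pow, q_pow_pm1 p hp]
  rw [inv_neg, inv_inv]

/-! ### q-integers -/

/-- the q-integers `[r]_q` -/
noncomputable def al : ℕ → ℂ
  | 0 => 0
  | r+1 => (qval p)⁻¹ ^ r + qval p * al r

lemma al_mul (r : ℕ) : al p r * (qval p - (qval p)⁻¹) = qval p ^ r - (qval p)⁻¹ ^ r := by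
  induction r with
  | zero => simp [al]
  | succ r ih =>
    show ((qval p)⁻¹ ^ r + qval p * al p r) * _ = _
    linear_combination qval p * ih

lemma al_succ (hp : 2 ≤ p) (r : ℕ) :
    al p (r+1) - (qval p)⁻¹ * al p r = qval p ^ r := by
  apply mul_right_cancel₀ (q_sub_inv_ne_zero p hp)
  linear_combination al_mul p (r+1) - (qval p)⁻¹ * al_mul p r

lemma al_p (hp : 2 ≤ p) : al p p = 0 := by
  apply mul_right_cancel₀ (q_sub_inv_ne_zero p hp)
  rw [al_mul p p, q_pow_p p hp, q_inv_pow_p p hp]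
  ring

lemma al_pm1 (hp : 2 ≤ p) : al p (p-1) = 1 := by
  apply mul_right_cancel₀ (q_sub_inv_ne_zero p hp)
  rw [al_mul p (p-1), q_pow_pm1 p hp, q_inv_pow_pm1 p hp]
  ring

/-! ### Gaussian binomials -/

/-- Gaussian binomial coefficients via the q-Pascal recurrence. -/
noncomputable def gb (z : ℂ) : ℕ → ℕ → ℂ
  | _, 0 => 1
  | 0, _+1 => 0
  | n+1, k+1 => z^(k+1) * gb z n (k+1) + gb z n k

variable (z : ℂ)

lemma gb_zero : ∀ n k, n < k → gb z n k = 0 := by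
  intro n
  induction n with
  | zero => intro k hk; match k, hk with | k+1, _ => rfl
  | succ n ih =>
    intro k hk
    match k, hk with
    | k+1, hk =>
      show z^(k+1) * gb z n (k+1) + gb z n k = 0
      rw [ih (k+1) (by omega), ih k (by omega)]; ring

lemma gb_prod : ∀ n k, k ≤ n →
    gb z n k * (∏ j ∈ Finset.range k, (1 - z^(j+1)))
      = ∏ j ∈ Finset.range k, (1 - z^(n - j)) := by
  intro n
  induction n with
  | zero => intro k hk; interval_cases k; simp [gb]
  | succ n ih =>
    intro k hk
    match k with
    | 0 => simp [gb]
    | k+1 =>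
      have hk' : k ≤ n := by omega
      show (z^(k+1) * gb z n (k+1) + gb z n k) * _ = _
      rw [Finset.prod_range_succ' (fun j => (1 - z^(n+1-j))) k]
      simp only [Nat.add_sub_cancel, Nat.succ_sub_succ, Nat.sub_zero]
      rcases Nat.lt_or_ge n (k+1) with hnk | hnk
      · -- k = n
        have hkn : k = n := by omega
        subst hkn
        rw [gb_zero z k (k+1) (by omega)]
        rw [Finset.prod_range_succ (fun j => (1 - z^(j+1))) k]
        have h2 := ih k le_rfl
        calc (z^(k+1) * 0 + gb z k k) * ((∏ j ∈ Finset.range k, (1 - z^(j+1))) * (1 - z^(k+1)))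
            = (gb z k k * (∏ j ∈ Finset.range k, (1 - z^(j+1)))) * (1 - z^(k+1)) := by ring
          _ = (∏ j ∈ Finset.range k, (1 - z^(k - j))) * (1 - z^(k+1)) := by rw [h2]
          _ = _ := by ring
      · -- k+1 ≤ n
        have h1 := ih (k+1) hnk
        have h2 := ih k hk'
        rw [Finset.prod_range_succ (fun j => (1 - z^(j+1))) k]
        have hsplit : (∏ j ∈ Finset.range (k+1), (1 - z^(n - j)))
            = (∏ j ∈ Finset.range k, (1 - z^(n - j))) * (1 - z^(n-k)) :=
          Finset.prod_range_succ _ k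
        have hzz : z^(k+1) * z^(n-k) = z^(n+1) := by
          rw [← pow_add]; congr 1; omega
        calc (z^(k+1) * gb z n (k+1) + gb z n k) * ((∏ j ∈ Finset.range k, (1 - z^(j+1))) * (1 - z^(k+1)))
            = z^(k+1) * (gb z n (k+1) * ∏ j ∈ Finset.range (k+1), (1 - z^(j+1)))
              + (gb z n k * ∏ j ∈ Finset.range k, (1 - z^(j+1))) * (1 - z^(k+1)) := by
              rw [Finset.prod_range_succ (fun j => (1 - z^(j+1))) k]; ring
          _ = z^(k+1) * ((∏ j ∈ Finset.range k, (1 - z^(n - j))) * (1 - z^(n-k)))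
              + (∏ j ∈ Finset.range k, (1 - z^(n - j))) * (1 - z^(k+1)) := by
              rw [h1, h2, hsplit]
          _ = (∏ j ∈ Finset.range k, (1 - z^(n - j))) * (1 - z^(n+1)) := by
              linear_combination (-(∏ j ∈ Finset.range k, (1 - z^(n-j)))) * hzz
          _ = _ := by ring

lemma gb_vanish (hz1 : z^p = 1) (hz : ∀ j, 0 < j → j < p → z^j ≠ 1)
    (k : ℕ) (h0 : 0 < k) (hk : k < p) : gb z p k = 0 := by
  have h := gb_prod z p k (le_of_lt hk)
  have hT : (∏ j ∈ Finset.range k, (1 - z^(p - j))) = 0 := by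
    apply Finset.prod_eq_zero (Finset.mem_range.mpr h0)
    simp [Nat.sub_zero, hz1]
  have hP : (∏ j ∈ Finset.range k, (1 - z^(j+1))) ≠ 0 := by
    apply Finset.prod_ne_zero_iff.mpr
    intro j hj
    have : z^(j+1) ≠ 1 := hz (j+1) (by omega) (by have := Finset.mem_range.mp hj; omega)
    intro hc
    exact this (by linear_combination -hc)
  rw [hT] at h
  exact (mul_eq_zero.mp h).resolve_right hP

/-- q-binomial theorem for q-commuting elements of a `ℂ`-algebra. -/
lemma q_binomial {R : Type*} [Ring R] [Algebra ℂ R] (a b : R)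
    (h : a * b = z • (b * a)) :
    ∀ n, (a + b)^n = ∑ k ∈ Finset.range (n+1), gb z n k • (b^k * a^(n-k)) := by
  have hab : ∀ k, a * b^k = z^k • (b^k * a) := by
    intro k
    induction k with
    | zero => simp
    | succ k ih =>
      rw [pow_succ, ← mul_assoc, ih, smul_mul_assoc, mul_assoc, h,
        mul_smul_comm, smul_smul, ← mul_assoc, pow_succ]
  intro n
  induction n with
  | zero => simp [gb]
  | succ n ih =>
    rw [pow_succ', ih, Finset.mul_sum]
    have key : ∀ k, (a + b) * (gb z n k • (b ^ k * a ^ (n - k)))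
        = (z^k * gb z n k) • (b^k * a^((n-k)+1)) + gb z n k • (b^(k+1) * a^(n-k)) := by
      intro k
      rw [add_mul, mul_smul_comm, mul_smul_comm, ← mul_assoc, hab k,
        smul_mul_assoc, smul_smul, mul_assoc, ← pow_succ', ← mul_assoc, ← pow_succ',
        mul_comm (gb z n k) (z^k)]
    simp only [key]
    rw [Finset.sum_add_distrib]
    conv_rhs => rw [Finset.sum_range_succ' (fun k => gb z (n+1) k • (b^k * a^(n+1-k))) (n+1)]
    have hgb : ∀ k, gb z (n+1) (k+1) = z^(k+1) * gb z n (k+1) + gb z n k := fun k => rfl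
    have hsplit : ∀ k:ℕ, gb z (n+1) (k+1) • (b^(k+1) * a^(n+1-(k+1)))
        = (z^(k+1) * gb z n (k+1)) • (b^(k+1) * a^(n-k)) + gb z n k • (b^(k+1) * a^(n-k)) := by
      intro k; rw [hgb k, Nat.succ_sub_succ, add_smul]
    simp only [hsplit]
    rw [Finset.sum_add_distrib]
    have hS1 : (∑ k ∈ Finset.range (n+1), (z^k * gb z n k) • (b^k * a^((n-k)+1)))
        = (∑ k ∈ Finset.range (n+1), (z^(k+1) * gb z n (k+1)) • (b^(k+1) * a^(n-k)))
          + gb z (n+1) 0 • (b^0 * a^(n+1-0)) := by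
      rw [Finset.sum_range_succ' (fun k => (z^k * gb z n k) • (b^k * a^((n-k)+1))) n]
      rw [Finset.sum_range_succ (fun k => (z^(k+1) * gb z n (k+1)) • (b^(k+1) * a^(n-k))) n]
      rw [gb_zero z n (n+1) (by omega)]
      congr 1
      · rw [mul_zero, zero_smul, add_zero]
        apply Finset.sum_congr rfl
        intro k hk
        have hh : (n - (k+1)) + 1 = n - k := by have := Finset.mem_range.mp hk; omega
        rw [hh]
      · show (z^0 * gb z n 0) • (b^0 * a^((n-0)+1)) = gb z (n+1) 0 • (b^0 * a^(n+1-0))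
        have g1 : gb z n 0 = 1 := by cases n <;> rfl
        have g2 : gb z (n+1) 0 = 1 := rfl
        rw [g1, g2]
        norm_num
    rw [hS1]
    abel

end NP

/-! ### The representation -/

namespace NP
variable (p : ℕ)

/-- the representation space -/
abbrev V : Type := (ℕ × ℕ × ℕ) →₀ ℂ

/-- basis vectors -/
noncomputable def E (r t s : ℕ) : V := Finsupp.single (r, t, s) (1:ℂ)

noncomputable def bas : Module.Basis (ℕ × ℕ × ℕ) ℂ V := Finsupp.basisSingleOne

lemma bas_eq (r t s : ℕ) : bas (r,t,s) = E r t s := by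
  unfold bas E
  rw [Finsupp.coe_basisSingleOne]

/-- action of F1 -/
noncomputable def OX1 : Module.End ℂ V :=
  bas.constr ℂ (fun i => if i.1 + 1 < p then E (i.1+1) i.2.1 i.2.2 else 0)

/-- first part of the action of F2 -/
noncomputable def OA : Module.End ℂ V :=
  bas.constr ℂ (fun i => if i.2.2 + 1 < p then
    (qval p ^ i.2.1 * (qval p)⁻¹ ^ i.1) • E i.1 i.2.1 (i.2.2+1) else 0)

/-- second part of the action of F2 -/
noncomputable def OB : Module.End ℂ V :=
  bas.constr ℂ (fun i => if i.2.1 + 1 < p then al p i.1 • E (i.1-1) (i.2.1+1) i.2.2 else 0)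

/-- action of F2 -/
noncomputable def OX2 : Module.End ℂ V := OA p + OB p

/-- action of F3 -/
noncomputable def OX3 : Module.End ℂ V := OX2 p * OX1 p - (qval p)⁻¹ • (OX1 p * OX2 p)

lemma OX1_E (r t s : ℕ) :
    OX1 p (E r t s) = if r + 1 < p then E (r+1) t s else 0 := by
  rw [show E r t s = bas (r,t,s) from (bas_eq r t s).symm, OX1, Module.Basis.constr_basis]

lemma OA_E (r t s : ℕ) :
    OA p (E r t s) = if s + 1 < p then
      (qval p ^ t * (qval p)⁻¹ ^ r) • E r t (s+1) else 0 := by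
  rw [show E r t s = bas (r,t,s) from (bas_eq r t s).symm, OA, Module.Basis.constr_basis]

lemma OB_E (r t s : ℕ) :
    OB p (E r t s) = if t + 1 < p then al p r • E (r-1) (t+1) s else 0 := by
  rw [show E r t s = bas (r,t,s) from (bas_eq r t s).symm, OB, Module.Basis.constr_basis]

lemma OX2_E (r t s : ℕ) :
    OX2 p (E r t s) = (if s + 1 < p then
      (qval p ^ t * (qval p)⁻¹ ^ r) • E r t (s+1) else 0)
      + (if t + 1 < p then al p r • E (r-1) (t+1) s else 0) := by
  rw [OX2]
  rw [LinearMap.add_apply, OA_E, OB_E]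

lemma OX3_E (hp : 2 ≤ p) (r t s : ℕ) :
    OX3 p (E r t s) = if t + 1 < p ∧ r < p then (qval p ^ r) • E r (t+1) s else 0 := by
  have hq := q_ne_zero p
  have h0p : 0 < p := by omega
  cases r with
  | zero =>
    have h1 : 0 + 1 < p := by omega
    have ha1 : al p 1 = 1 := by simp [al]
    have ha0 : al p 0 = 0 := rfl
    by_cases hs : s + 1 < p <;> by_cases ht : t + 1 < p <;>
      simp only [OX3, LinearMap.sub_apply, LinearMap.smul_apply, Module.End.mul_apply,
        OX1_E, OX2_E, map_add, map_smul, map_zero, Nat.zero_sub, Nat.add_sub_cancel,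
        h1, hs, ht, h0p, if_true, if_false, ite_true, ite_false, ha0, ha1,
        zero_smul, smul_zero, add_zero, zero_add, sub_zero, one_smul,
        true_and, and_true, and_self, and_false, false_and, pow_zero] <;>
      match_scalars <;> field_simp <;> ring
  | succ r' =>
    by_cases hr : r' + 1 + 1 < p
    · have hr1 : r' + 1 < p := by omega
      have hA : al p (r'+1+1) = qval p ^ (r'+1) + (qval p)⁻¹ * al p (r'+1) := by
        linear_combination al_succ p hp (r'+1)
      by_cases hs : s + 1 < p <;> by_cases ht : t + 1 < p <;>
        simp only [OX3, LinearMap.sub_apply, LinearMap.smul_apply, Module.End.mul_apply,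
          OX1_E, OX2_E, map_add, map_smul, map_zero, Nat.add_sub_cancel,
          hr, hr1, hs, ht, if_true, if_false, ite_true, ite_false, hA,
          zero_smul, smul_zero, add_zero, zero_add, sub_zero, one_smul,
          true_and, and_true, and_self, and_false, false_and] <;>
        match_scalars <;> field_simp <;> ring <;> field_simp <;> ring
    · by_cases hrp : r' + 1 < p
      · have hrm : r' + 1 = p - 1 := by omega
        have hal : al p (r'+1) = 1 := by rw [hrm]; exact al_pm1 p hp
        have hq1 : qval p ^ (r'+1) = -(qval p)⁻¹ := by rw [hrm]; exact q_pow_pm1 p hp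
        by_cases hs : s + 1 < p <;> by_cases ht : t + 1 < p <;>
          simp only [OX3, LinearMap.sub_apply, LinearMap.smul_apply, Module.End.mul_apply,
            OX1_E, OX2_E, map_add, map_smul, map_zero, Nat.add_sub_cancel,
            hr, hrp, hs, ht, if_true, if_false, ite_true, ite_false, hal, hq1,
            zero_smul, smul_zero, add_zero, zero_add, sub_zero, one_smul, zero_sub,
            true_and, and_true, and_self, and_false, false_and, neg_zero] <;>
          match_scalars <;> field_simp <;> ring
      · have hr2 : ¬ (r' + 1 - 1 + 1 < p) := by omega
        by_cases hs : s + 1 < p <;> by_cases ht : t + 1 < p <;>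
          simp only [OX3, LinearMap.sub_apply, LinearMap.smul_apply, Module.End.mul_apply,
            OX1_E, OX2_E, map_add, map_smul, map_zero, Nat.add_sub_cancel,
            hr, hrp, hr2, hs, ht, if_true, if_false, ite_true, ite_false,
            zero_smul, smul_zero, add_zero, zero_add, sub_zero, zero_sub, one_smul,
            true_and, and_true, and_self, and_false, false_and, neg_zero]


lemma comm1 (hp : 2 ≤ p) : OX1 p * OX3 p = (qval p)⁻¹ • (OX3 p * OX1 p) := by
  have hq := q_ne_zero p
  apply Module.Basis.ext bas
  rintro ⟨r, t, s⟩
  rw [bas_eq]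
  rw [LinearMap.smul_apply, Module.End.mul_apply, Module.End.mul_apply, OX3_E p hp, OX1_E]
  by_cases hr : r + 1 < p
  · by_cases ht : t + 1 < p
    · rw [if_pos (show t+1 < p ∧ r < p from ⟨ht, by omega⟩), if_pos hr, map_smul,
        OX3_E p hp, if_pos ⟨ht, hr⟩, OX1_E, if_pos hr]
      match_scalars <;> field_simp <;> ring
    · rw [if_neg (by tauto : ¬(t+1 < p ∧ r < p)), if_pos hr, map_zero, OX3_E p hp,
        if_neg (by tauto : ¬(t+1 < p ∧ r+1 < p)), smul_zero]
  · rw [if_neg hr, map_zero, smul_zero]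
    by_cases htp : t + 1 < p ∧ r < p
    · rw [if_pos htp, map_smul, OX1_E, if_neg hr, smul_zero]
    · rw [if_neg htp, map_zero]

lemma comm2 (hp : 2 ≤ p) : OX2 p * OX3 p = qval p • (OX3 p * OX2 p) := by
  have hq := q_ne_zero p
  have h0p : 0 < p := by omega
  apply Module.Basis.ext bas
  rintro ⟨r, t, s⟩
  rw [bas_eq]
  rw [LinearMap.smul_apply, Module.End.mul_apply, Module.End.mul_apply, OX3_E p hp, OX2_E]
  cases r with
  | zero =>
    have ha0 : al p 0 = 0 := rfl
    by_cases hs : s + 1 < p <;> by_cases ht : t + 1 < p <;> by_cases htt : t + 1 + 1 < p <;>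
      simp only [hs, ht, htt, h0p, if_true, if_false, ite_true, ite_false, map_zero,
        map_add, map_smul, smul_zero, add_zero, zero_add, OX3_E p hp, OX2_E, OX1_E,
        true_and, and_true, and_self, false_and, and_false, ha0, zero_smul,
        Nat.zero_sub, pow_zero, one_smul] <;>
      match_scalars <;> field_simp <;> ring
  | succ r' =>
    by_cases hrp : r' + 1 < p
    · have hr' : r' < p := by omega
      have e1 : r' + 1 - 1 = r' := rfl
      by_cases hs : s + 1 < p <;> by_cases ht : t + 1 < p <;> by_cases htt : t + 1 + 1 < p <;>
        simp only [hs, ht, htt, hrp, hr', e1, if_true, if_false, ite_true, ite_false,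
          map_zero, map_add, map_smul, smul_zero, add_zero, zero_add,
          OX3_E p hp, OX2_E, OX1_E,
          true_and, and_true, and_self, false_and, and_false, zero_smul] <;>
        match_scalars <;> field_simp <;> ring
    · by_cases hrP : r' + 1 = p
      · have hr' : r' < p := by omega
        have e1 : r' + 1 - 1 = r' := rfl
        have hal : al p (r' + 1) = 0 := by rw [hrP]; exact al_p p hp
        by_cases hs : s + 1 < p <;> by_cases ht : t + 1 < p <;> by_cases htt : t + 1 + 1 < p <;>
          simp only [hs, ht, htt, hrp, hr', e1, hal, if_true, if_false, ite_true, ite_false,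
            map_zero, map_add, map_smul, smul_zero, add_zero, zero_add,
            OX3_E p hp, OX2_E, OX1_E,
            true_and, and_true, and_self, false_and, and_false, zero_smul]
      · have hr' : ¬ (r' < p) := by omega
        have e1 : r' + 1 - 1 = r' := rfl
        by_cases hs : s + 1 < p <;> by_cases ht : t + 1 < p <;> by_cases htt : t + 1 + 1 < p <;>
          simp only [hs, ht, htt, hrp, hr', e1, if_true, if_false, ite_true, ite_false,
            map_zero, map_add, map_smul, smul_zero, add_zero, zero_add,
            OX3_E p hp, OX2_E, OX1_E,
            true_and, and_true, and_self, false_and, and_false, zero_smul]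

lemma comm_AB : OA p * OB p = (qval p ^ 2) • (OB p * OA p) := by
  have hq := q_ne_zero p
  apply Module.Basis.ext bas
  rintro ⟨r, t, s⟩
  rw [bas_eq]
  rw [LinearMap.smul_apply, Module.End.mul_apply, Module.End.mul_apply, OA_E, OB_E]
  cases r with
  | zero =>
    have ha0 : al p 0 = 0 := rfl
    by_cases hs : s + 1 < p <;> by_cases ht : t + 1 < p <;>
      simp only [hs, ht, if_true, if_false, ite_true, ite_false, map_zero, map_smul,
        smul_zero, OA_E, OB_E, ha0, zero_smul, smul_smul] <;> rfl
  | succ r' =>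
    have e1 : r' + 1 - 1 = r' := rfl
    by_cases hs : s + 1 < p <;> by_cases ht : t + 1 < p <;>
      simp only [hs, ht, e1, if_true, if_false, ite_true, ite_false, map_zero, map_smul,
        smul_zero, OA_E, OB_E, zero_smul] <;>
      match_scalars <;> field_simp <;> ring <;> field_simp <;> ring

lemma OX1_pow_zero : ∀ n, 1 ≤ n → ∀ r t s, p ≤ r + n → (OX1 p ^ n) (E r t s) = 0 := by
  intro n
  induction n with
  | zero => omega
  | succ n ih =>
    intro _ r t s hrn
    rw [pow_succ, Module.End.mul_apply, OX1_E]
    by_cases hr : r + 1 < p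
    · rw [if_pos hr]
      rcases Nat.eq_zero_or_pos n with rfl | hn
      · omega
      · exact ih hn (r+1) t s (by omega)
    · rw [if_neg hr, map_zero]

lemma OA_pow_zero : ∀ n, 1 ≤ n → ∀ r t s, p ≤ s + n → (OA p ^ n) (E r t s) = 0 := by
  intro n
  induction n with
  | zero => omega
  | succ n ih =>
    intro _ r t s hsn
    rw [pow_succ, Module.End.mul_apply, OA_E]
    by_cases hs : s + 1 < p
    · rw [if_pos hs]
      rcases Nat.eq_zero_or_pos n with rfl | hn
      · omega
      · rw [map_smul, ih hn r t (s+1) (by omega), smul_zero]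
    · rw [if_neg hs, map_zero]

lemma OB_pow_zero : ∀ n, 1 ≤ n → ∀ r t s, p ≤ t + n → (OB p ^ n) (E r t s) = 0 := by
  intro n
  induction n with
  | zero => omega
  | succ n ih =>
    intro _ r t s htn
    rw [pow_succ, Module.End.mul_apply, OB_E]
    by_cases ht : t + 1 < p
    · rw [if_pos ht]
      rcases Nat.eq_zero_or_pos n with rfl | hn
      · omega
      · rw [map_smul, ih hn (r-1) (t+1) s (by omega), smul_zero]
    · rw [if_neg ht, map_zero]

lemma OX3_pow_zero (hp : 2 ≤ p) :
    ∀ n, 1 ≤ n → ∀ r t s, p ≤ t + n → (OX3 p ^ n) (E r t s) = 0 := by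
  intro n
  induction n with
  | zero => omega
  | succ n ih =>
    intro _ r t s htn
    rw [pow_succ, Module.End.mul_apply, OX3_E p hp]
    by_cases ht : t + 1 < p ∧ r < p
    · rw [if_pos ht]
      rcases Nat.eq_zero_or_pos n with rfl | hn
      · omega
      · rw [map_smul, ih hn r (t+1) s (by omega), smul_zero]
    · rw [if_neg ht, map_zero]

lemma OX1_pow_p (hp : 2 ≤ p) : OX1 p ^ p = 0 := by
  apply Module.Basis.ext bas
  rintro ⟨r, t, s⟩
  rw [bas_eq, LinearMap.zero_apply]
  exact OX1_pow_zero p p (by omega) r t s (by omega)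

lemma OA_pow_p (hp : 2 ≤ p) : OA p ^ p = 0 := by
  apply Module.Basis.ext bas
  rintro ⟨r, t, s⟩
  rw [bas_eq, LinearMap.zero_apply]
  exact OA_pow_zero p p (by omega) r t s (by omega)

lemma OB_pow_p (hp : 2 ≤ p) : OB p ^ p = 0 := by
  apply Module.Basis.ext bas
  rintro ⟨r, t, s⟩
  rw [bas_eq, LinearMap.zero_apply]
  exact OB_pow_zero p p (by omega) r t s (by omega)

lemma OX3_pow_p (hp : 2 ≤ p) : OX3 p ^ p = 0 := by
  apply Module.Basis.ext bas
  rintro ⟨r, t, s⟩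
  rw [bas_eq, LinearMap.zero_apply]
  exact OX3_pow_zero p hp p (by omega) r t s (by omega)

lemma OX2_pow_p (hp : 2 ≤ p) : OX2 p ^ p = 0 := by
  rw [OX2, q_binomial (qval p ^ 2) (OA p) (OB p) (comm_AB p) p]
  apply Finset.sum_eq_zero
  intro k hk
  have hk' : k < p + 1 := Finset.mem_range.mp hk
  rcases Nat.eq_zero_or_pos k with rfl | hk0
  · rw [pow_zero, one_mul, Nat.sub_zero, OA_pow_p p hp, smul_zero]
  · rcases Nat.lt_or_ge k p with hkp | hkp
    · rw [gb_vanish p (qval p ^ 2) (by rw [← pow_mul, pow_mul']; rw [q_pow_p p hp]; norm_num)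
        (fun j h1 h2 => q_sq_pow_ne_one p hp j h1 h2) k hk0 hkp, zero_smul]
    · have hkp' : k = p := by omega
      rw [hkp', Nat.sub_self, pow_zero, OB_pow_p p hp, zero_mul, smul_zero]


/-! ### The representation of the free algebra and of `B` -/

noncomputable def rep : A →ₐ[ℂ] Module.End ℂ V :=
  FreeAlgebra.lift ℂ (fun i : Fin 2 => if i = 0 then OX1 p else OX2 p)

lemma rep_F1 : rep p F1 = OX1 p := by
  rw [rep, F1, FreeAlgebra.lift_ι_apply, if_pos rfl]

lemma rep_F2 : rep p F2 = OX2 p := by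
  rw [rep, F2, FreeAlgebra.lift_ι_apply, if_neg (by decide)]

lemma rep_F3 : rep p (F3 p) = OX3 p := by
  rw [F3, map_sub, map_smul, map_mul, map_mul, rep_F1, rep_F2, OX3]

lemma abstract_a {R : Type*} [Ring R] [Algebra ℂ R] (q : ℂ) (hq : q ≠ 0) (X1 X2 X3 : R)
    (hdef : X3 = X2 * X1 - q⁻¹ • (X1 * X2))
    (h : X1 * X3 = q⁻¹ • (X3 * X1)) :
    X1 ^ 2 * X2 - (q + q⁻¹) • (X1 * X2 * X1) + X2 * X1 ^ 2 = 0 := by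
  rw [hdef] at h
  simp only [mul_sub, sub_mul, smul_sub, smul_smul, mul_smul_comm, smul_mul_assoc,
    ← mul_assoc] at h
  simp only [pow_two, ← mul_assoc]
  linear_combination (norm := (match_scalars <;> field_simp <;> ring)) (-q) • h

lemma abstract_b {R : Type*} [Ring R] [Algebra ℂ R] (q : ℂ) (hq : q ≠ 0) (X1 X2 X3 : R)
    (hdef : X3 = X2 * X1 - q⁻¹ • (X1 * X2))
    (h : X2 * X3 = q • (X3 * X2)) :
    X2 ^ 2 * X1 - (q + q⁻¹) • (X2 * X1 * X2) + X1 * X2 ^ 2 = 0 := by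
  rw [hdef] at h
  simp only [mul_sub, sub_mul, smul_sub, smul_smul, mul_smul_comm, smul_mul_assoc,
    ← mul_assoc] at h
  simp only [pow_two, ← mul_assoc]
  linear_combination (norm := (match_scalars <;> field_simp <;> ring)) h

lemma rel_a (hp : 2 ≤ p) :
    OX1 p ^ 2 * OX2 p - (qval p + (qval p)⁻¹) • (OX1 p * OX2 p * OX1 p)
      + OX2 p * OX1 p ^ 2 = 0 :=
  abstract_a (qval p) (q_ne_zero p) (OX1 p) (OX2 p) (OX3 p) rfl (comm1 p hp)

lemma rel_b (hp : 2 ≤ p) :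
    OX2 p ^ 2 * OX1 p - (qval p + (qval p)⁻¹) • (OX2 p * OX1 p * OX2 p)
      + OX1 p * OX2 p ^ 2 = 0 :=
  abstract_b (qval p) (q_ne_zero p) (OX1 p) (OX2 p) (OX3 p) rfl (comm2 p hp)

lemma rep_rel (hp : 2 ≤ p) : ∀ ⦃x y : A⦄, nicholsRel p x y → rep p x = rep p y := by
  rintro x y ⟨rfl, hx⟩
  rw [map_zero]
  simp only [Set.mem_insert_iff, Set.mem_singleton_iff] at hx
  rcases hx with rfl | rfl | rfl | rfl | rfl
  · simp only [map_add, map_sub, map_smul, map_mul, map_pow, rep_F1, rep_F2]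
    exact rel_a p hp
  · simp only [map_add, map_sub, map_smul, map_mul, map_pow, rep_F1, rep_F2]
    exact rel_b p hp
  · rw [map_pow, rep_F1]; exact OX1_pow_p p hp
  · rw [map_pow, rep_F3]; exact OX3_pow_p p hp
  · rw [map_pow, rep_F2]; exact OX2_pow_p p hp

/-- The representation of `B`. -/
noncomputable def repB (hp : 2 ≤ p) : NicholsB p →ₐ[ℂ] Module.End ℂ V :=
  RingQuot.liftAlgHom ℂ ⟨rep p, rep_rel p hp⟩

lemma repB_mk (hp : 2 ≤ p) (x : A) :
    repB p hp (RingQuot.mkAlgHom ℂ (nicholsRel p) x) = rep p x :=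
  RingQuot.liftAlgHom_mkAlgHom_apply ℂ (rep p) (rep_rel p hp) x

/-! ### Evaluation of PBW monomials -/

lemma OX2_pow_E0 (s : ℕ) (hs : s < p) : (OX2 p ^ s) (E 0 0 0) = E 0 0 s := by
  induction s with
  | zero => simp
  | succ s ih =>
    rw [pow_succ', Module.End.mul_apply, ih (by omega), OX2_E]
    have ha0 : al p 0 = 0 := rfl
    rw [if_pos hs, ha0, zero_smul, ite_self, add_zero, pow_zero, pow_zero, mul_one,
      one_smul]

lemma OX3_pow_E0 (hp : 2 ≤ p) (t : ℕ) (ht : t < p) (s : ℕ) :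
    (OX3 p ^ t) (E 0 0 s) = E 0 t s := by
  induction t with
  | zero => simp
  | succ t ih =>
    rw [pow_succ', Module.End.mul_apply, ih (by omega), OX3_E p hp,
      if_pos ⟨ht, by omega⟩, pow_zero, one_smul]

lemma OX1_pow_E0 (r : ℕ) (hr : r < p) (t s : ℕ) :
    (OX1 p ^ r) (E 0 t s) = E r t s := by
  induction r with
  | zero => simp
  | succ r ih =>
    rw [pow_succ', Module.End.mul_apply, ih (by omega), OX1_E, if_pos hr]

lemma repB_pbw (hp : 2 ≤ p) (r t s : ℕ) (hr : r < p) (ht : t < p) (hs : s < p) :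
    repB p hp (pbw p r t s) (E 0 0 0) = E r t s := by
  rw [pbw, repB_mk, map_mul, map_mul, map_pow, map_pow, map_pow, rep_F1, rep_F2, rep_F3]
  rw [Module.End.mul_apply, Module.End.mul_apply, OX2_pow_E0 p s hs,
    OX3_pow_E0 p hp t ht s, OX1_pow_E0 p r hr t s]



/-! ### Relations in the quotient algebra `B` -/

/-- abbreviation for the quotient map -/
noncomputable abbrev mkB : A →ₐ[ℂ] NicholsB p := RingQuot.mkAlgHom ℂ (nicholsRel p)

lemma memrel (x : A)
    (hx : x ∈ ({F1 ^ 2 * F2 - (qval p + (qval p)⁻¹) • (F1 * F2 * F1) + F2 * F1 ^ 2,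
          F2 ^ 2 * F1 - (qval p + (qval p)⁻¹) • (F2 * F1 * F2) + F1 * F2 ^ 2,
          F1 ^ p, F3 p ^ p, F2 ^ p} : Set A)) : mkB p x = 0 := by
  have h := RingQuot.mkAlgHom_rel ℂ (s := nicholsRel p) (x := x) (y := 0) ⟨rfl, hx⟩
  rwa [map_zero] at h

lemma Bpow1 : mkB p F1 ^ p = 0 := by
  have := memrel p (F1^p) (by simp only [Set.mem_insert_iff, Set.mem_singleton_iff]; tauto)
  rwa [map_pow] at this

lemma Bpow2 : mkB p F2 ^ p = 0 := by
  have := memrel p (F2^p) (by simp only [Set.mem_insert_iff, Set.mem_singleton_iff]; tauto)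
  rwa [map_pow] at this

lemma Bpow3 : mkB p (F3 p) ^ p = 0 := by
  have := memrel p (F3 p^p) (by simp only [Set.mem_insert_iff, Set.mem_singleton_iff]; tauto)
  rwa [map_pow] at this

lemma Bdef3 : mkB p (F3 p) = mkB p F2 * mkB p F1 - (qval p)⁻¹ • (mkB p F1 * mkB p F2) := by
  rw [F3, map_sub, map_smul, map_mul, map_mul]

lemma Brel_a : mkB p F1 ^ 2 * mkB p F2
    - (qval p + (qval p)⁻¹) • (mkB p F1 * mkB p F2 * mkB p F1)
    + mkB p F2 * mkB p F1 ^ 2 = 0 := by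
  have := memrel p (F1 ^ 2 * F2 - (qval p + (qval p)⁻¹) • (F1 * F2 * F1) + F2 * F1 ^ 2)
    (by simp only [Set.mem_insert_iff, Set.mem_singleton_iff]; tauto)
  simpa only [map_add, map_sub, map_smul, map_mul, map_pow] using this

lemma Brel_b : mkB p F2 ^ 2 * mkB p F1
    - (qval p + (qval p)⁻¹) • (mkB p F2 * mkB p F1 * mkB p F2)
    + mkB p F1 * mkB p F2 ^ 2 = 0 := by
  have := memrel p (F2 ^ 2 * F1 - (qval p + (qval p)⁻¹) • (F2 * F1 * F2) + F1 * F2 ^ 2)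
    (by simp only [Set.mem_insert_iff, Set.mem_singleton_iff]; tauto)
  simpa only [map_add, map_sub, map_smul, map_mul, map_pow] using this

lemma abstract_c1 {R : Type*} [Ring R] [Algebra ℂ R] (q : ℂ) (hq : q ≠ 0) (X1 X2 X3 : R)
    (hdef : X3 = X2 * X1 - q⁻¹ • (X1 * X2))
    (hrel : X1 ^ 2 * X2 - (q + q⁻¹) • (X1 * X2 * X1) + X2 * X1 ^ 2 = 0) :
    X3 * X1 = q • (X1 * X3) := by
  rw [hdef]
  simp only [pow_two, ← mul_assoc] at hrel
  simp only [mul_sub, sub_mul, smul_sub, smul_smul, mul_smul_comm, smul_mul_assoc,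
    ← mul_assoc]
  linear_combination (norm := (match_scalars <;> field_simp <;> ring)) hrel

lemma abstract_c2 {R : Type*} [Ring R] [Algebra ℂ R] (q : ℂ) (hq : q ≠ 0) (X1 X2 X3 : R)
    (hdef : X3 = X2 * X1 - q⁻¹ • (X1 * X2))
    (hrel : X2 ^ 2 * X1 - (q + q⁻¹) • (X2 * X1 * X2) + X1 * X2 ^ 2 = 0) :
    X2 * X3 = q • (X3 * X2) := by
  rw [hdef]
  simp only [pow_two, ← mul_assoc] at hrel
  simp only [mul_sub, sub_mul, smul_sub, smul_smul, mul_smul_comm, smul_mul_assoc,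
    ← mul_assoc]
  linear_combination (norm := (match_scalars <;> field_simp <;> ring)) hrel

lemma Bc1 : mkB p (F3 p) * mkB p F1 = qval p • (mkB p F1 * mkB p (F3 p)) :=
  abstract_c1 (qval p) (q_ne_zero p) _ _ _ (Bdef3 p) (Brel_a p)

lemma Bc2 : mkB p F2 * mkB p (F3 p) = qval p • (mkB p (F3 p) * mkB p F2) :=
  abstract_c2 (qval p) (q_ne_zero p) _ _ _ (Bdef3 p) (Brel_b p)

lemma BL2 : ∀ t : ℕ, mkB p F2 * mkB p (F3 p) ^ t
    = (qval p ^ t) • (mkB p (F3 p) ^ t * mkB p F2) := by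
  intro t
  induction t with
  | zero => simp
  | succ t ih =>
    rw [pow_succ, ← mul_assoc, ih, smul_mul_assoc, mul_assoc, Bc2,
      mul_smul_comm, smul_smul, ← mul_assoc, ← pow_succ, ← pow_succ]

lemma BL1 : ∀ r : ℕ, mkB p F2 * mkB p F1 ^ (r+1)
    = ((qval p)⁻¹ ^ (r+1)) • (mkB p F1 ^ (r+1) * mkB p F2)
      + al p (r+1) • (mkB p F1 ^ r * mkB p (F3 p)) := by
  intro r
  have hb : mkB p F2 * mkB p F1 = (qval p)⁻¹ • (mkB p F1 * mkB p F2) + mkB p (F3 p) := by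
    rw [Bdef3]; abel
  induction r with
  | zero =>
    have ha1 : al p 1 = 1 := by simp [al]
    rw [pow_one, pow_one, pow_zero, one_mul, hb, ha1, one_smul]
  | succ r ih =>
    rw [pow_succ (mkB p F1) (r+1), ← mul_assoc, ih]
    rw [add_mul, smul_mul_assoc, smul_mul_assoc, mul_assoc, hb, mul_assoc, Bc1]
    have hal : al p (r+1+1) = (qval p)⁻¹ ^ (r+1) + qval p * al p (r+1) := rfl
    simp only [mul_add, mul_smul_comm, smul_add, smul_smul, hal,
      ← mul_assoc, ← pow_succ]
    match_scalars <;> ring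

lemma Bstep1 (r t s : ℕ) : mkB p F1 * (mkB p F1 ^ r * mkB p (F3 p) ^ t * mkB p F2 ^ s)
    = mkB p F1 ^ (r+1) * mkB p (F3 p) ^ t * mkB p F2 ^ s := by
  rw [← mul_assoc, ← mul_assoc, ← pow_succ']

lemma Bstep2 (r t s : ℕ) : mkB p F2 * (mkB p F1 ^ r * mkB p (F3 p) ^ t * mkB p F2 ^ s)
    = (qval p ^ t * (qval p)⁻¹ ^ r) • (mkB p F1 ^ r * mkB p (F3 p) ^ t * mkB p F2 ^ (s+1))
      + al p r • (mkB p F1 ^ (r-1) * mkB p (F3 p) ^ (t+1) * mkB p F2 ^ s) := by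
  cases r with
  | zero =>
    have ha0 : al p 0 = 0 := rfl
    rw [ha0, zero_smul, add_zero]
    simp only [pow_zero, one_mul, mul_one]
    rw [← mul_assoc, BL2, smul_mul_assoc, mul_assoc, ← pow_succ']
  | succ r =>
    have e1 : r + 1 - 1 = r := rfl
    rw [e1, ← mul_assoc, ← mul_assoc, BL1]
    rw [add_mul, add_mul, smul_mul_assoc, smul_mul_assoc, smul_mul_assoc, smul_mul_assoc]
    congr 1
    · rw [mul_assoc (mkB p F1 ^ (r+1)) (mkB p F2) (mkB p (F3 p) ^ t), BL2,
        mul_smul_comm, smul_mul_assoc, smul_smul,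
        mul_comm ((qval p)⁻¹ ^ (r+1)) (qval p ^ t)]
      simp only [mul_assoc, ← pow_succ']
    · rw [mul_assoc (mkB p F1 ^ r) (mkB p (F3 p)) (mkB p (F3 p) ^ t), ← pow_succ']

lemma pbw_eq (r t s : ℕ) :
    pbw p r t s = mkB p F1 ^ r * mkB p (F3 p) ^ t * mkB p F2 ^ s := by
  rw [pbw]
  simp only [map_mul, map_pow]

lemma pbw_zero (r t s : ℕ) (h : p ≤ r ∨ p ≤ t ∨ p ≤ s) : pbw p r t s = 0 := by
  rw [pbw_eq]
  rcases h with h | h | h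
  · rw [show r = p + (r - p) by omega, pow_add, Bpow1, zero_mul, zero_mul, zero_mul]
  · rw [show t = p + (t - p) by omega, pow_add, Bpow3, zero_mul, mul_zero, zero_mul]
  · rw [show s = p + (s - p) by omega, pow_add, Bpow2, zero_mul, mul_zero]



end NP

theorem pbw_basis (p : ℕ) (hp : 2 ≤ p) :
    LinearIndependent ℂ
        (fun rts : Fin p × Fin p × Fin p =>
          pbw p rts.1.val rts.2.1.val rts.2.2.val) ∧
    Submodule.span ℂ
        (Set.range (fun rts : Fin p × Fin p × Fin p =>
          pbw p rts.1.val rts.2.1.val rts.2.2.val)) = ⊤ ∧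
    Module.finrank ℂ (NicholsB p) = p ^ 3 := by
  have h0p : 0 < p := by omega
  -- linear independence
  have hinj : Function.Injective (fun rts : Fin p × Fin p × Fin p =>
      ((rts.1 : ℕ), (rts.2.1 : ℕ), (rts.2.2 : ℕ))) := by
    rintro ⟨a, b, c⟩ ⟨d, e, f⟩ h
    simp only [Prod.mk.injEq] at h
    obtain ⟨h1, h2, h3⟩ := h
    exact Prod.ext (Fin.val_injective h1) (Prod.ext (Fin.val_injective h2) (Fin.val_injective h3))
  have hEli : LinearIndependent ℂ (fun rts : Fin p × Fin p × Fin p =>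
      NP.E (rts.1 : ℕ) (rts.2.1 : ℕ) (rts.2.2 : ℕ)) := by
    have h2 := (NP.bas.linearIndependent).comp _ hinj
    have hfun : (fun rts : Fin p × Fin p × Fin p =>
        NP.E (rts.1 : ℕ) (rts.2.1 : ℕ) (rts.2.2 : ℕ))
        = (⇑NP.bas ∘ (fun rts : Fin p × Fin p × Fin p =>
            ((rts.1 : ℕ), (rts.2.1 : ℕ), (rts.2.2 : ℕ)))) := by
      funext rts
      exact (NP.bas_eq _ _ _).symm
    rw [hfun]
    exact h2
  have hLI : LinearIndependent ℂ (fun rts : Fin p × Fin p × Fin p =>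
      pbw p rts.1.val rts.2.1.val rts.2.2.val) := by
    set φ : NicholsB p →ₗ[ℂ] NP.V :=
      (LinearMap.applyₗ (NP.E 0 0 0)).comp (NP.repB p hp).toLinearMap with hφdef
    apply LinearIndependent.of_comp φ
    have hcomp : ⇑φ ∘ (fun rts : Fin p × Fin p × Fin p =>
        pbw p rts.1.val rts.2.1.val rts.2.2.val)
        = fun rts : Fin p × Fin p × Fin p =>
            NP.E (rts.1 : ℕ) (rts.2.1 : ℕ) (rts.2.2 : ℕ) := by
      funext rts
      exact NP.repB_pbw p hp _ _ _ rts.1.isLt rts.2.1.isLt rts.2.2.isLt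
    rw [hcomp]
    exact hEli
  -- spanning
  set S := Submodule.span ℂ
      (Set.range (fun rts : Fin p × Fin p × Fin p =>
        pbw p rts.1.val rts.2.1.val rts.2.2.val)) with hSdef
  have key : ∀ r t s : ℕ,
      NP.mkB p F1 ^ r * NP.mkB p (F3 p) ^ t * NP.mkB p F2 ^ s ∈ S := by
    intro r t s
    rw [← NP.pbw_eq p r t s]
    by_cases h : r < p ∧ t < p ∧ s < p
    · apply Submodule.subset_span
      exact ⟨(⟨r, h.1⟩, ⟨t, h.2.1⟩, ⟨s, h.2.2⟩), rfl⟩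
    · rw [NP.pbw_zero p r t s (by omega)]
      exact zero_mem _
  have hone : (1 : NicholsB p) ∈ S := by
    have := key 0 0 0
    simpa using this
  have hmulmem : ∀ x : A, ∀ v ∈ S, NP.mkB p x * v ∈ S := by
    intro x
    refine FreeAlgebra.induction ℂ (Fin 2)
      (motive := fun a => ∀ v ∈ S, NP.mkB p a * v ∈ S) ?_ ?_ ?_ ?_ x
    · intro r v hv
      rw [AlgHom.commutes, ← Algebra.smul_def]
      exact Submodule.smul_mem _ r hv
    · intro i v hv
      fin_cases i
      · refine Submodule.span_induction ?_ ?_ ?_ ?_ hv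
        · rintro w ⟨rts, rfl⟩
          show NP.mkB p (FreeAlgebra.ι ℂ 0) * pbw p rts.1.val rts.2.1.val rts.2.2.val ∈ S
          rw [show FreeAlgebra.ι ℂ (0 : Fin 2) = F1 from rfl, NP.pbw_eq, NP.Bstep1]
          exact key _ _ _
        · rw [mul_zero]; exact zero_mem _
        · intro a b _ _ ha hb
          rw [mul_add]; exact add_mem ha hb
        · intro c a _ h
          rw [mul_smul_comm]; exact Submodule.smul_mem _ c h
      · refine Submodule.span_induction ?_ ?_ ?_ ?_ hv
        · rintro w ⟨rts, rfl⟩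
          show NP.mkB p (FreeAlgebra.ι ℂ 1) * pbw p rts.1.val rts.2.1.val rts.2.2.val ∈ S
          rw [show FreeAlgebra.ι ℂ (1 : Fin 2) = F2 from rfl, NP.pbw_eq, NP.Bstep2]
          exact add_mem (Submodule.smul_mem _ _ (key _ _ _))
            (Submodule.smul_mem _ _ (key _ _ _))
        · rw [mul_zero]; exact zero_mem _
        · intro a b _ _ ha hb
          rw [mul_add]; exact add_mem ha hb
        · intro c a _ h
          rw [mul_smul_comm]; exact Submodule.smul_mem _ c h
    · intro a b ha hb v hv
      rw [map_mul, mul_assoc]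
      exact ha _ (hb v hv)
    · intro a b ha hb v hv
      rw [map_add, add_mul]
      exact add_mem (ha v hv) (hb v hv)
  have hSP : S = ⊤ := by
    rw [Submodule.eq_top_iff']
    intro x
    obtain ⟨y, rfl⟩ := RingQuot.mkAlgHom_surjective ℂ (nicholsRel p) x
    have := hmulmem y 1 hone
    simpa using this
  refine ⟨hLI, hSP, ?_⟩
  have hb : Module.Basis (Fin p × Fin p × Fin p) ℂ (NicholsB p) := Module.Basis.mk hLI (by rw [← hSdef]; exact hSP.ge)
  rw [Module.finrank_eq_card_basis hb]
  simp only [Fintype.card_prod, Fintype.card_fin]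
  ring
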